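/- The function H(x,y) = (y² − cos(x))·(x² + y²)·exp(2·arctan(y/x)) is a first integral of the system ẋ = (x+y)cos(x) − y(x²+xy+2y²), ẏ = (y−x)(cos(x)−y²) + ((x²+y²)/2)sin(x) on the open set {x ≠ 0}; that is, P·∂H/∂x + Q·∂H/∂y = 0 there. -/

import Mathlib

set_option maxHeartbeats 2000000
open Real ContinuousLinearMap


/-- `H(x,y) = (y² − cos x)(x² + y²) exp(2 arctan(y/x))` is a first integral of the
system `ẋ = (x+y)cos x − y(x²+xy+2y²)`,
`ẏ = (y−x)(cos x − y²) + ((x²+y²)/2) sin x` on the open set `{x ≠ 0}`. -/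
theorem stmt_8
    (P Q H : ℝ × ℝ → ℝ)
    (hP : ∀ p : ℝ × ℝ, P p = (p.1 + p.2) * Real.cos p.1
      - p.2 * (p.1 ^ 2 + p.1 * p.2 + 2 * p.2 ^ 2))
    (hQ : ∀ p : ℝ × ℝ, Q p = (p.2 - p.1) * (Real.cos p.1 - p.2 ^ 2)
      + (p.1 ^ 2 + p.2 ^ 2) / 2 * Real.sin p.1)
    (hH : ∀ p : ℝ × ℝ, H p = (p.2 ^ 2 - Real.cos p.1) * (p.1 ^ 2 + p.2 ^ 2)
      * Real.exp (2 * Real.arctan (p.2 / p.1))) :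
    ∀ p : ℝ × ℝ, p.1 ≠ 0 →
      P p * fderiv ℝ H p (1, 0) + Q p * fderiv ℝ H p (0, 1) = 0 := by
  intro p hx
  obtain ⟨x, y⟩ := p
  simp only at hx ⊢
  set c := Real.cos x with hc
  set s := Real.sin x with hs
  -- derivative components
  have hfst : HasFDerivAt (fun q : ℝ × ℝ => q.1) (fst ℝ ℝ ℝ) (x, y) := hasFDerivAt_fst
  have hsnd : HasFDerivAt (fun q : ℝ × ℝ => q.2) (snd ℝ ℝ ℝ) (x, y) := hasFDerivAt_snd
  have hinv : HasFDerivAt (fun q : ℝ × ℝ => (q.1)⁻¹)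
      ((-(x ^ 2)⁻¹) • fst ℝ ℝ ℝ) (x, y) :=
    (hasDerivAt_inv hx).comp_hasFDerivAt (x, y) hfst
  have hratio : HasFDerivAt (fun q : ℝ × ℝ => q.2 * (q.1)⁻¹)
      (y • ((-(x ^ 2)⁻¹) • fst ℝ ℝ ℝ) + x⁻¹ • snd ℝ ℝ ℝ) (x, y) := hsnd.mul hinv
  have harctan : HasFDerivAt (fun q : ℝ × ℝ => Real.arctan (q.2 * (q.1)⁻¹))
      ((1 / (1 + (y * x⁻¹) ^ 2)) •
        (y • ((-(x ^ 2)⁻¹) • fst ℝ ℝ ℝ) + x⁻¹ • snd ℝ ℝ ℝ)) (x, y) :=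
    by have := (Real.hasDerivAt_arctan (y * x⁻¹)).comp_hasFDerivAt (x, y) hratio; exact this
  have h2arctan := harctan.const_mul (2 : ℝ)
  have hexp : HasFDerivAt (fun q : ℝ × ℝ => Real.exp (2 * Real.arctan (q.2 * (q.1)⁻¹)))
      ((Real.exp (2 * Real.arctan (y * x⁻¹))) • ((2:ℝ) • ((1 / (1 + (y * x⁻¹) ^ 2)) •
        (y • ((-(x ^ 2)⁻¹) • fst ℝ ℝ ℝ) + x⁻¹ • snd ℝ ℝ ℝ)))) (x, y) :=
    (Real.hasDerivAt_exp _).comp_hasFDerivAt (x, y) h2arctan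
  have hu : HasFDerivAt (fun q : ℝ × ℝ => q.2 ^ 2 - Real.cos q.1)
      (((2:ℝ) * y ^ 1) • snd ℝ ℝ ℝ - (-s) • fst ℝ ℝ ℝ) (x, y) :=
    by
      have := ((hasDerivAt_pow 2 y).comp_hasFDerivAt (x, y) hsnd).sub
        ((Real.hasDerivAt_cos x).comp_hasFDerivAt (x, y) hfst)
      simp only [Nat.cast_ofNat] at this; exact this
  have hv : HasFDerivAt (fun q : ℝ × ℝ => q.1 ^ 2 + q.2 ^ 2)
      (((2:ℝ) * x ^ 1) • fst ℝ ℝ ℝ + ((2:ℝ) * y ^ 1) • snd ℝ ℝ ℝ) (x, y) :=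
    by
      have := ((hasDerivAt_pow 2 x).comp_hasFDerivAt (x, y) hfst).add
        ((hasDerivAt_pow 2 y).comp_hasFDerivAt (x, y) hsnd)
      simp only [Nat.cast_ofNat] at this; exact this
  have hHf := (hu.mul hv).mul hexp
  have hHeq : H = fun q : ℝ × ℝ => (q.2 ^ 2 - Real.cos q.1) * (q.1 ^ 2 + q.2 ^ 2)
      * Real.exp (2 * Real.arctan (q.2 * (q.1)⁻¹)) := by
    funext q; rw [hH q, div_eq_mul_inv]
  rw [hP, hQ, hHeq, show (fun q : ℝ × ℝ => (q.2 ^ 2 - Real.cos q.1) * (q.1 ^ 2 + q.2 ^ 2)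
      * Real.exp (2 * Real.arctan (q.2 * (q.1)⁻¹))) = ((fun q : ℝ × ℝ => q.2 ^ 2 - Real.cos q.1) * (fun q : ℝ × ℝ => q.1 ^ 2 + q.2 ^ 2))
      * (fun q : ℝ × ℝ => Real.exp (2 * Real.arctan (q.2 * (q.1)⁻¹))) from rfl, hHf.fderiv]
  have hpos : (0:ℝ) < 1 + (y * x⁻¹) ^ 2 := by positivity
  simp only [ContinuousLinearMap.add_apply, ContinuousLinearMap.sub_apply,
    ContinuousLinearMap.smul_apply, ContinuousLinearMap.coe_fst', ContinuousLinearMap.coe_snd',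
    smul_eq_mul, pow_one, Pi.mul_apply, hs]
  field_simp
  ring
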